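/- Let (X,d) be a compact ultrametric space and let Φ : X → X be a weak similarity from (X,d) to itself. Then Φ is an isometry: d(Φ(x),Φ(y)) = d(x,y) for all x, y ∈ X. -/

import Mathlib

/-- The distance set `D(X)` of a metric space `X`. -/
def distSetM (X : Type*) [MetricSpace X] : Set ℝ := {r | ∃ x y : X, dist x y = r}

theorem stmt12 {X : Type*} [MetricSpace X] [CompactSpace X]
    (hultra : ∀ x y z : X, dist x y ≤ max (dist x z) (dist z y))
    (Φ : X → X) (f : ℝ → ℝ)
    (hsurj : Function.Surjective Φ)
    (hmono : StrictMonoOn f (distSetM X))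
    (hmaps : Set.MapsTo f (distSetM X) (distSetM X))
    (heq : ∀ x y : X, dist x y = f (dist (Φ x) (Φ y))) :
    ∀ x y : X, dist (Φ x) (Φ y) = dist x y := by
  intro a b
  set D := distSetM X with hD
  have hmem : ∀ x y : X, dist x y ∈ D := fun x y => ⟨x, y, rfl⟩
  have hf0 : f 0 = 0 := by
    have h := heq a a
    simpa using h.symm
  have h0D : (0:ℝ) ∈ D := ⟨a, a, dist_self a⟩
  -- finiteness of distances ≥ r
  have hfin : ∀ r : ℝ, 0 < r → (D ∩ Set.Ici r).Finite := by
    intro r hr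
    obtain ⟨I, hI⟩ := (isCompact_univ (X := X)).elim_finite_subcover
      (fun x : X => Metric.ball x r) (fun x => Metric.isOpen_ball)
      (fun x _ => Set.mem_iUnion.mpr ⟨x, Metric.mem_ball_self hr⟩)
    apply Set.Finite.subset (Set.Finite.image (fun p : X × X => dist p.1 p.2)
      ((I.finite_toSet).prod (I.finite_toSet)))
    rintro s ⟨⟨x, y, rfl⟩, hs⟩
    have hs' : r ≤ dist x y := hs
    have hx := hI (Set.mem_univ x)
    have hy := hI (Set.mem_univ y)
    simp only [Set.mem_iUnion, Metric.mem_ball] at hx hy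
    obtain ⟨i, hiI, hxi⟩ := hx
    obtain ⟨j, hjI, hyj⟩ := hy
    refine ⟨(i, j), ⟨hiI, hjI⟩, ?_⟩
    -- show dist i j = dist x y
    have h1 : dist x y ≤ max (dist x i) (max (dist i j) (dist j y)) :=
      le_trans (hultra x y i) (max_le_max_left _ (hultra i y j))
    have h2 : dist i j ≤ max (dist i x) (max (dist x y) (dist y j)) :=
      le_trans (hultra i j x) (max_le_max_left _ (hultra x j y))
    have hix : dist i x < r := by rw [dist_comm]; exact hxi
    have hjy : dist j y < r := by rw [dist_comm]; exact hyj
    have hle1 : dist x y ≤ dist i j := by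
      rcases max_cases (dist x i) (max (dist i j) (dist j y)) with ⟨he, _⟩ | ⟨he, _⟩ <;>
        rw [he] at h1
      · linarith
      · rcases max_cases (dist i j) (dist j y) with ⟨he2, _⟩ | ⟨he2, _⟩ <;>
          rw [he2] at h1 <;> linarith
    have hle2 : dist i j ≤ dist x y := by
      rcases max_cases (dist i x) (max (dist x y) (dist y j)) with ⟨he, _⟩ | ⟨he, _⟩ <;>
        rw [he] at h2
      · linarith [dist_comm (α := X) y j ▸ hjy]
      · rcases max_cases (dist x y) (dist y j) with ⟨he2, _⟩ | ⟨he2, _⟩ <;>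
          rw [he2] at h2
        · exact h2
        · have : dist y j < r := by rw [dist_comm]; exact hjy
          linarith
    exact le_antisymm hle2 hle1
  -- f is surjective on D
  have hfsurj : ∀ s ∈ D, ∃ t ∈ D, f t = s := by
    rintro s ⟨x, y, rfl⟩
    exact ⟨dist (Φ x) (Φ y), hmem _ _, (heq x y).symm⟩
  -- f is the identity on D
  have hid : ∀ s ∈ D, f s = s := by
    intro s hs
    obtain ⟨x, y, hxy⟩ := hs
    have hs0 : 0 ≤ s := hxy ▸ dist_nonneg
    have hsD : s ∈ D := ⟨x, y, hxy⟩
    rcases eq_or_lt_of_le hs0 with h0 | hspos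
    · rw [← h0, hf0]
    set t := f s with htdef
    have htD : t ∈ D := hmaps hsD
    have ht0 : 0 < t := by
      have := hmono h0D hsD hspos
      rwa [hf0] at this
    rcases lt_trichotomy t s with hts | hts | hts
    · -- t < s : counting contradiction
      exfalso
      set A := D ∩ Set.Ici s with hA
      set B := D ∩ Set.Ici t with hB
      have hAfin := hfin s hspos
      have hBfin := hfin t ht0
      have hADsub : A ⊆ D := Set.inter_subset_left
      have hAB : A ⊆ B := Set.inter_subset_inter_right _ (Set.Ici_subset_Ici.mpr hts.le)
      have himA : f '' A ⊆ B := by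
        rintro _ ⟨u, ⟨huD, hus⟩, rfl⟩
        refine ⟨hmaps huD, ?_⟩
        have : f s ≤ f u := (hmono.monotoneOn) hsD huD hus
        exact le_trans (le_of_eq htdef) this
      have hBim : B ⊆ f '' A := by
        rintro c ⟨hcD, hct⟩
        obtain ⟨u, huD, hu⟩ := hfsurj c hcD
        refine ⟨u, ⟨huD, ?_⟩, hu⟩
        by_contra hlt
        simp only [Set.mem_Ici, not_le] at hlt
        have hcc : f u < f s := hmono huD hsD hlt
        rw [hu, ← htdef] at hcc
        exact absurd (Set.mem_Ici.mp hct) (not_le.mpr hcc)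
      have hinj : Set.InjOn f A := hmono.injOn.mono hADsub
      have h1 : B.ncard ≤ (f '' A).ncard := Set.ncard_le_ncard hBim (hAfin.image f)
      have h2 : (f '' A).ncard = A.ncard := Set.ncard_image_of_injOn hinj
      have h3 : A.ncard < B.ncard := by
        refine Set.ncard_lt_ncard ?_ hBfin
        rw [Set.ssubset_iff_of_subset hAB]
        exact ⟨t, ⟨htD, le_refl t⟩, fun h => absurd h.2 (not_le.mpr hts)⟩
      omega
    · exact hts
    · -- s < t : counting contradiction
      exfalso
      set A := D ∩ Set.Ici s with hA
      have hAfin := hfin s hspos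
      have hADsub : A ⊆ D := Set.inter_subset_left
      have hsA : s ∈ A := ⟨hsD, le_refl s⟩
      have himA : f '' A ⊆ A \ {s} := by
        rintro _ ⟨u, ⟨huD, hus⟩, rfl⟩
        have hfu : f s ≤ f u := (hmono.monotoneOn) hsD huD hus
        rw [← htdef] at hfu
        refine ⟨⟨hmaps huD, le_trans hts.le hfu⟩, ?_⟩
        intro h
        rw [Set.mem_singleton_iff] at h
        rw [h] at hfu
        linarith
      have hinj : Set.InjOn f A := hmono.injOn.mono hADsub
      have h1 : (f '' A).ncard = A.ncard := Set.ncard_image_of_injOn hinj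
      have h2 : (f '' A).ncard ≤ (A \ {s}).ncard :=
        Set.ncard_le_ncard himA hAfin.diff
      have h3 : (A \ {s}).ncard < A.ncard := Set.ncard_diff_singleton_lt_of_mem hsA hAfin
      omega
  rw [heq a b]
  exact (hid _ (hmem (Φ a) (Φ b))).symm
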